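/- arXiv:1309.0603 — 2 statements merged into one kernel-verified Lean document; each statement's English description precedes it below -/
import Mathlib

section
/- Let G be a finite simple graph with a C3-free vertex x, let X = N[x] be the closed neighborhood of x, and let π be any permutation of V(G) such that π(v) = v for every v ∈ V(G) − X, π(v) ≠ v for every v ∈ X, and (when |X| ≥ 3) π has no 2-cycles inside X (if π(v) = u with u, v ∈ X then π(u) ≠ v). Then no separable γ-set of G is effective under π. -/
open SimpleGraph

variable {V : Type*}

/-- `D` is a dominating set of `G`: every vertex is in `D` or adjacent to a vertex of `D`. -/
def IsDomSet (G : SimpleGraph V) (D : Set V) : Prop :=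
  ∀ v : V, ∃ d ∈ D, d = v ∨ G.Adj d v

/-- The domination number of `G`: minimum cardinality of a dominating set. -/
noncomputable def domNum (G : SimpleGraph V) : ℕ :=
  sInf {n | ∃ D : Set V, IsDomSet G D ∧ D.ncard = n}

/-- The prism `πG` of `G`: two disjoint copies of `G` together with the matching
`{u (π u) : u ∈ V(G)}`, the second copy playing the role of `G'`. -/
def prism (G : SimpleGraph V) (π : Equiv.Perm V) : SimpleGraph (V ⊕ V) where
  Adj a b :=
    match a, b with
    | Sum.inl u, Sum.inl v => G.Adj u v
    | Sum.inr u, Sum.inr v => G.Adj u v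
    | Sum.inl u, Sum.inr v => π u = v
    | Sum.inr u, Sum.inl v => π v = u
  symm := by
    constructor
    rintro (u | u) (v | v) h
    · exact G.adj_symm h
    · exact h
    · exact h
    · exact G.adj_symm h
  loopless := by
    constructor
    rintro (u | u) h
    · exact G.loopless.irrefl u h
    · exact G.loopless.irrefl u h

/-- The closed neighborhood `N[v]` of a vertex. -/
def closedNbhd (G : SimpleGraph V) (v : V) : Set V :=
  insert v (G.neighborSet v)

/-- `x` is a `C₃`-free vertex: non-isolated and belonging to no triangle of `G`. -/
def C3Free (G : SimpleGraph V) (x : V) : Prop :=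
  (∃ y, G.Adj x y) ∧ ∀ u v : V, G.Adj x u → G.Adj x v → ¬ G.Adj u v

/-- `A = A1 ∪ A2` is a separable γ-set of `G` (an `A1`-γ-set): `A1, A2` are nonempty,
disjoint, `A` is a γ-set, and `A1` dominates `V(G) - A`. -/
def SepGammaSet (G : SimpleGraph V) (A1 A2 : Set V) : Prop :=
  A1.Nonempty ∧ A2.Nonempty ∧ Disjoint A1 A2 ∧
  IsDomSet G (A1 ∪ A2) ∧ (A1 ∪ A2).ncard = domNum G ∧
  ∀ v ∉ A1 ∪ A2, ∃ u ∈ A1, G.Adj u v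

/-- The separable γ-set `A = A1 ∪ A2` is effective under `π`: `π(A)` is a γ-set of the
copy `G'` of `G` (identified with `G`) whose dominating part is `B2' = π(A2)`,
i.e. `π(A2)` dominates `V(G') - π(A)`. -/
def Effective (G : SimpleGraph V) (π : Equiv.Perm V) (A1 A2 : Set V) : Prop :=
  IsDomSet G (⇑π '' (A1 ∪ A2)) ∧ (⇑π '' (A1 ∪ A2)).ncard = domNum G ∧
  ∀ v ∉ ⇑π '' (A1 ∪ A2), ∃ u ∈ ⇑π '' A2, G.Adj u v

/-- The star `K_{1,m}` on `Fin (m+1)`, with center `0` adjacent to the `m` leaves. -/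
def starGraph (m : ℕ) : SimpleGraph (Fin (m + 1)) where
  Adj a b := (a = 0 ∧ b ≠ 0) ∨ (b = 0 ∧ a ≠ 0)
  symm := ⟨fun a b h => Or.symm h⟩
  loopless := ⟨fun a h => by rcases h with ⟨h1, h2⟩ | ⟨h1, h2⟩ <;> exact h2 h1⟩

/-- for a `C₃`-free vertex `x` with `X = N[x]` and a permutation `π` fixing
`V - X` pointwise, moving every vertex of `X`, and (when `|X| ≥ 3`) having no 2-cycles
inside `X`, no separable γ-set of `G` is effective under `π`. -/
theorem no_effective_sep_gamma_set [Fintype V] (G : SimpleGraph V) (x : V)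
    (hx : C3Free G x) (π : Equiv.Perm V)
    (hfix : ∀ v ∉ closedNbhd G x, π v = v)
    (hmove : ∀ v ∈ closedNbhd G x, π v ≠ v)
    (h2cyc : 3 ≤ (closedNbhd G x).ncard →
      ∀ u ∈ closedNbhd G x, ∀ v ∈ closedNbhd G x, π v = u → π u ≠ v) :
    ∀ A1 A2 : Set V, SepGammaSet G A1 A2 → ¬ Effective G π A1 A2 := by
  intro A1 A2 hsep heff
  obtain ⟨-, -, hdisj, -, hcard, hA1dom⟩ := hsep
  obtain ⟨-, hBcard, hB2dom⟩ := heff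
  set X := closedNbhd G x with hXdef
  set A : Set V := A1 ∪ A2 with hAdef
  set B : Set V := ⇑π '' A with hBdef
  have hXmem : ∀ v, v ∈ X ↔ v = x ∨ G.Adj x v := by
    intro v; simp [hXdef, closedNbhd, SimpleGraph.mem_neighborSet]
  have hxX : x ∈ X := (hXmem x).2 (Or.inl rfl)
  have hadjX : ∀ v ∈ X, v ≠ x → G.Adj x v := fun v hv hne =>
    ((hXmem v).1 hv).resolve_left hne
  have hK3 : ∀ v, G.Adj x v → ∀ u, G.Adj u v → u ∈ X → u = x := by
    intro v hv u huv hu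
    rcases (hXmem u).1 hu with h | h
    · exact h
    · exact absurd huv (hx.2 u v h hv)
  have himg : ∀ (S : Set V) (w : V), w ∈ ⇑π '' S ↔ π.symm w ∈ S := by
    intro S w
    constructor
    · rintro ⟨a, ha, rfl⟩; simpa using ha
    · intro h; exact ⟨π.symm w, h, by simp⟩
  have hfix' : ∀ v, v ∉ X → π.symm v = v := by
    intro v hv
    conv_lhs => rw [← hfix v hv]
    simp
  have hπX : ∀ v ∈ X, π v ∈ X := by
    intro v hv
    by_contra hc
    exact hmove v hv (π.injective (hfix (π v) hc))
  have hπsX : ∀ v ∈ X, π.symm v ∈ X := by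
    intro v hv
    by_contra hc
    have h1 : π (π.symm v) = π.symm v := hfix _ hc
    simp only [Equiv.apply_symm_apply] at h1
    exact hc (h1 ▸ hv)
  have hBAeq : ∀ v, v ∉ X → (v ∈ B ↔ v ∈ A) := by
    intro v hv
    rw [hBdef, himg A v, hfix' v hv]
  have hB2B : ⇑π '' A2 ⊆ B := Set.image_mono Set.subset_union_right
  have hsmall : ∀ D : Set V, IsDomSet G D → D.ncard < A.ncard → False := by
    intro D hD hlt
    have h1 : domNum G ≤ D.ncard := Nat.sInf_le ⟨D, hD, rfl⟩
    rw [hcard] at hlt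
    omega
  -- every vertex of A2 has no neighbor inside A
  have hA2iso : ∀ a ∈ A2, ∀ u ∈ A, ¬ G.Adj u a := by
    intro a ha u hu hadj
    apply hsmall (A \ {a})
    · intro v
      by_cases hv : v = a
      · exact ⟨u, ⟨hu, by simp [G.ne_of_adj hadj]⟩, Or.inr (hv ▸ hadj)⟩
      · by_cases hvA : v ∈ A
        · exact ⟨v, ⟨hvA, by simp [hv]⟩, Or.inl rfl⟩
        · obtain ⟨u', hu', hu'adj⟩ := hA1dom v hvA
          have : u' ≠ a := fun h => Set.disjoint_left.mp hdisj hu' (h ▸ ha)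
          exact ⟨u', ⟨Or.inl hu', by simp [this]⟩, Or.inr hu'adj⟩
    · have := Set.ncard_diff_singleton_add_one (show a ∈ A from Or.inr ha)
      omega
  -- every vertex of π(A1) has no neighbor inside B
  have hB1iso : ∀ b ∈ ⇑π '' A1, ∀ u ∈ B, ¬ G.Adj u b := by
    intro b hb u hu hadj
    have hbB : b ∈ B := Set.image_mono Set.subset_union_left hb
    apply hsmall (B \ {b})
    · intro v
      by_cases hv : v = b
      · exact ⟨u, ⟨hu, by simp [G.ne_of_adj hadj]⟩, Or.inr (hv ▸ hadj)⟩
      · by_cases hvB : v ∈ B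
        · exact ⟨v, ⟨hvB, by simp [hv]⟩, Or.inl rfl⟩
        · obtain ⟨u', hu', hu'adj⟩ := hB2dom v hvB
          have hne : u' ≠ b := by
            intro h
            have h1 : π.symm u' ∈ A2 := (himg A2 u').1 hu'
            have h2 : π.symm b ∈ A1 := (himg A1 b).1 hb
            exact Set.disjoint_left.mp hdisj h2 (h ▸ h1)
          exact ⟨u', ⟨hB2B hu', by simp [hne]⟩, Or.inr hu'adj⟩
    · have h1 := Set.ncard_diff_singleton_add_one hbB
      have h2 : B.ncard = A.ncard := hBcard.trans hcard.symm
      omega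
  by_cases hxA : x ∈ A
  · by_cases hxA1 : x ∈ A1
    · -- Case 1b : x ∈ A1 : direct contradiction
      have hA2X : ∀ a ∈ A2, a ∉ X := by
        intro a ha haX
        rcases (hXmem a).1 haX with h | h
        · exact Set.disjoint_left.mp hdisj hxA1 (h ▸ ha)
        · exact hA2iso a ha x hxA h
      have hxB : x ∈ B := by
        by_contra hxB
        obtain ⟨w, hwB2, hwadj⟩ := hB2dom x hxB
        have hwX : w ∈ X := (hXmem w).2 (Or.inr hwadj.symm)
        exact hA2X _ ((himg A2 w).1 hwB2) (hπsX w hwX)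
      have hsxA1 : π.symm x ∈ A1 := by
        rcases (himg A x).1 hxB with h | h
        · exact h
        · exact absurd (hπsX x hxX) (hA2X _ h)
      have hxB1 : x ∈ ⇑π '' A1 := (himg A1 x).2 hsxA1
      have hπxB : π x ∈ B := ⟨x, hxA, rfl⟩
      have hπxX : π x ∈ X := hπX x hxX
      exact hB1iso x hxB1 (π x) hπxB (hadjX (π x) hπxX (hmove x hxX)).symm
    · -- Case 1a : x ∈ A2
      have hxA2 : x ∈ A2 := hxA.resolve_left hxA1
      have hAX : ∀ a ∈ A, a ∈ X → a = x := by
        intro a ha haX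
        rcases (hXmem a).1 haX with h | h
        · exact h
        · exact absurd h.symm (hA2iso x hxA2 a ha)
      set y := π x with hydef
      have hyX : y ∈ X := hπX x hxX
      have hynex : y ≠ x := hmove x hxX
      have hyadj : G.Adj x y := hadjX y hyX hynex
      have hyA : y ∉ A := fun h => hynex (hAX y h hyX)
      obtain ⟨u, huA1, huadj⟩ := hA1dom y hyA
      have huX : u ∉ X := by
        intro huX
        have := hK3 y hyadj u huadj huX
        exact hxA1 (this ▸ huA1)
      have hunex : u ≠ x := fun h => huX (h ▸ hxX)
      apply hsmall (insert y ((A \ {x}) \ {u}))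
      · intro v
        by_cases hvy : v = y
        · exact ⟨v, hvy ▸ Set.mem_insert _ _, Or.inl rfl⟩
        · by_cases hvx : v = x
          · exact ⟨y, Set.mem_insert _ _, Or.inr (hvx ▸ hyadj.symm)⟩
          · by_cases hvu : v = u
            · exact ⟨y, Set.mem_insert _ _, Or.inr (hvu ▸ huadj.symm)⟩
            · by_cases hvA : v ∈ A
              · exact ⟨v, Set.mem_insert_of_mem _ ⟨⟨hvA, by simp [hvx]⟩, by simp [hvu]⟩,
                  Or.inl rfl⟩
              · have hvB : v ∉ B := by
                  by_cases hvX : v ∈ X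
                  · intro hvB
                    have h1 : π.symm v ∈ A := (himg A v).1 hvB
                    have h2 := hAX _ h1 (hπsX v hvX)
                    apply hvy
                    have := congrArg π h2
                    simpa [hydef] using this
                  · exact fun h => hvA ((hBAeq v hvX).1 h)
                obtain ⟨w, hwB2, hwadj⟩ := hB2dom v hvB
                by_cases hwX : w ∈ X
                · have h1 : π.symm w ∈ A2 := (himg A2 w).1 hwB2
                  have h2 := hAX _ (Or.inr h1) (hπsX w hwX)
                  have hwy : w = y := by
                    have := congrArg π h2
                    simpa [hydef] using this
                  exact ⟨y, Set.mem_insert _ _, Or.inr (hwy ▸ hwadj)⟩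
                · have hw2 : w ∈ A2 := by
                    have := (himg A2 w).1 hwB2
                    rwa [hfix' w hwX] at this
                  have hwnex : w ≠ x := fun h => hwX (h ▸ hxX)
                  have hwu : w ≠ u := fun h =>
                    Set.disjoint_left.mp hdisj huA1 (h ▸ hw2)
                  exact ⟨w, Set.mem_insert_of_mem _ ⟨⟨Or.inr hw2, by simp [hwnex]⟩,
                    by simp [hwu]⟩, Or.inr hwadj⟩
      · have h1 := Set.ncard_diff_singleton_add_one hxA
        have h2 := Set.ncard_diff_singleton_add_one
          (show u ∈ A \ {x} from ⟨Or.inl huA1, by simp [hunex]⟩)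
        have h3 : y ∉ (A \ {x}) \ {u} := fun h => hyA h.1.1
        rw [Set.ncard_insert_of_notMem h3]
        omega
  · by_cases hxB : x ∈ B
    · -- Case 2a : x ∉ A, x ∈ B
      set c := π.symm x with hcdef
      have hcA : c ∈ A := (himg A x).1 hxB
      have hcX : c ∈ X := hπsX x hxX
      have hcnex : c ≠ x := fun h => hxA (h ▸ hcA)
      have hadjxc : G.Adj x c := hadjX c hcX hcnex
      have hπc : π c = x := by simp [hcdef]
      by_cases hcA1 : c ∈ A1
      · -- 2a-ii : c ∈ A1
        have hxB1 : x ∈ ⇑π '' A1 := (himg A1 x).2 hcA1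
        have hBN : ∀ b ∈ B, ¬ G.Adj x b := fun b hb hadj =>
          hB1iso x hxB1 b hb hadj.symm
        have hAXc : ∀ a ∈ A, a ∈ X → a = c := by
          intro a ha haX
          have h1 : π a ∈ B := ⟨a, ha, rfl⟩
          have h2 : π a ∈ X := hπX a haX
          by_cases h3 : π a = x
          · have := congrArg π.symm h3
            simpa [hcdef] using this
          · exact absurd (hadjX (π a) h2 h3) (hBN (π a) h1)
        have hcB : c ∉ B := by
          intro hcB
          have h1 : π.symm c ∈ A := (himg A c).1 hcB
          have h3 := hAXc _ h1 (hπsX c hcX)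
          have h4 := congrArg π h3
          simp only [Equiv.apply_symm_apply] at h4
          exact hmove c hcX h4.symm
        obtain ⟨u, huB2, huadj⟩ := hB2dom c hcB
        by_cases huX : u ∈ X
        · have hux := hK3 c hadjxc u huadj huX
          have h1 : π.symm x ∈ A2 := (himg A2 x).1 (hux ▸ huB2)
          exact Set.disjoint_left.mp hdisj hcA1 h1
        · have hu2 : u ∈ A2 := by
            have := (himg A2 u).1 huB2
            rwa [hfix' u huX] at this
          exact hA2iso u hu2 c hcA huadj.symm
      · -- 2a-i : c ∈ A2
        have hcA2 : c ∈ A2 := hcA.resolve_left hcA1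
        have hA1X : ∀ a ∈ A1, a ∉ X := by
          intro a haA1 haX
          have hanex : a ≠ x := fun h => hxA (h ▸ Or.inl haA1)
          have hπaB1 : π a ∈ ⇑π '' A1 := ⟨a, haA1, rfl⟩
          have hπaX : π a ∈ X := hπX a haX
          have hπanex : π a ≠ x := by
            intro h
            have := congrArg π.symm h
            simp only [Equiv.symm_apply_apply] at this
            rw [← hcdef] at this
            exact hcA1 (this ▸ haA1)
          exact hB1iso (π a) hπaB1 x hxB (hadjX (π a) hπaX hπanex)
        obtain ⟨w, hwA1, hwadj⟩ := hA1dom x hxA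
        exact hA1X w hwA1 ((hXmem w).2 (Or.inr hwadj.symm))
    · -- Case 2b : x ∉ A, x ∉ B
      obtain ⟨n1, hn1A1, hn1adj⟩ := hA1dom x hxA
      have hxn1 : G.Adj x n1 := hn1adj.symm
      have hn1X : n1 ∈ X := (hXmem n1).2 (Or.inr hxn1)
      obtain ⟨w, hwB2, hwadj⟩ := hB2dom x hxB
      have hxw : G.Adj x w := hwadj.symm
      have hwX : w ∈ X := (hXmem w).2 (Or.inr hxw)
      set n2 := π.symm w with hn2def
      have hn2A2 : n2 ∈ A2 := (himg A2 w).1 hwB2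
      have hn2X : n2 ∈ X := hπsX w hwX
      have hn2nex : n2 ≠ x := fun h => hxA (h ▸ Or.inr hn2A2)
      have hxn2 : G.Adj x n2 := hadjX n2 hn2X hn2nex
      have hπn2 : π n2 = w := by simp [hn2def]
      have hn1n2 : n1 ≠ n2 := fun h =>
        Set.disjoint_left.mp hdisj hn1A1 (h ▸ hn2A2)
      -- A2 ∩ X = {n2}
      have hA2X : ∀ a ∈ A2, a ∈ X → a = n2 := by
        intro a ha haX
        by_contra hne
        have haA : a ∈ A := Or.inr ha
        apply hsmall (insert x ((A \ {a}) \ {n2}))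
        · intro v
          by_cases hvX : v ∈ X
          · exact ⟨x, Set.mem_insert _ _, ((hXmem v).1 hvX).imp Eq.symm id⟩
          · by_cases hvA : v ∈ A
            · have h1 : v ≠ a := fun h => hvX (h ▸ haX)
              have h2 : v ≠ n2 := fun h => hvX (h ▸ hn2X)
              exact ⟨v, Set.mem_insert_of_mem _ ⟨⟨hvA, by simp [h1]⟩, by simp [h2]⟩,
                Or.inl rfl⟩
            · obtain ⟨u', hu', hu'adj⟩ := hA1dom v hvA
              have h1 : u' ≠ a := fun h => Set.disjoint_left.mp hdisj hu' (h ▸ ha)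
              have h2 : u' ≠ n2 := fun h => Set.disjoint_left.mp hdisj hu' (h ▸ hn2A2)
              exact ⟨u', Set.mem_insert_of_mem _ ⟨⟨Or.inl hu', by simp [h1]⟩,
                by simp [h2]⟩, Or.inr hu'adj⟩
        · have h1 := Set.ncard_diff_singleton_add_one haA
          have h2 := Set.ncard_diff_singleton_add_one
            (show n2 ∈ A \ {a} from ⟨Or.inr hn2A2, by simp [Ne.symm hne]⟩)
          have h3 : x ∉ (A \ {a}) \ {n2} := fun h => hxA h.1.1
          rw [Set.ncard_insert_of_notMem h3]
          omega
      -- A1 ∩ X = {n1}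
      have hA1X : ∀ a ∈ A1, a ∈ X → a = n1 := by
        intro a ha haX
        by_contra hne
        have hπaB : π a ∈ B := ⟨a, Or.inl ha, rfl⟩
        have hπn1B : π n1 ∈ B := ⟨n1, Or.inl hn1A1, rfl⟩
        have hπane : π a ≠ π n1 := fun h => hne (π.injective h)
        have hπaX : π a ∈ X := hπX a haX
        have hπn1X : π n1 ∈ X := hπX n1 hn1X
        apply hsmall (insert x ((B \ {π a}) \ {π n1}))
        · intro v
          by_cases hvX : v ∈ X
          · exact ⟨x, Set.mem_insert _ _, ((hXmem v).1 hvX).imp Eq.symm id⟩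
          · by_cases hvB : v ∈ B
            · have h1 : v ≠ π a := fun h => hvX (h ▸ hπaX)
              have h2 : v ≠ π n1 := fun h => hvX (h ▸ hπn1X)
              exact ⟨v, Set.mem_insert_of_mem _ ⟨⟨hvB, by simp [h1]⟩, by simp [h2]⟩,
                Or.inl rfl⟩
            · obtain ⟨u', hu', hu'adj⟩ := hB2dom v hvB
              have hu'A2 : π.symm u' ∈ A2 := (himg A2 u').1 hu'
              have h1 : u' ≠ π a := by
                intro h
                apply Set.disjoint_left.mp hdisj ha
                have : π.symm u' = a := by rw [h]; simp
                exact this ▸ hu'A2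
              have h2 : u' ≠ π n1 := by
                intro h
                apply Set.disjoint_left.mp hdisj hn1A1
                have : π.symm u' = n1 := by rw [h]; simp
                exact this ▸ hu'A2
              exact ⟨u', Set.mem_insert_of_mem _ ⟨⟨hB2B hu', by simp [h1]⟩,
                by simp [h2]⟩, Or.inr hu'adj⟩
        · have h1 := Set.ncard_diff_singleton_add_one (show π a ∈ B from hπaB)
          have h2 := Set.ncard_diff_singleton_add_one
            (show π n1 ∈ B \ {π a} from ⟨hπn1B, by simp [Ne.symm hπane]⟩)
          have h3 : x ∉ (B \ {π a}) \ {π n1} := fun h => hxB h.1.1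
          have h4 : B.ncard = A.ncard := hBcard.trans hcard.symm
          rw [Set.ncard_insert_of_notMem h3]
          omega
      by_cases h21 : π n1 = n2
      · -- 2b-2 : π n1 = n2, use no-2-cycle hypothesis
        have hX3 : 3 ≤ X.ncard := by
          have hsub : ({x, n1, n2} : Set V) ⊆ X := by
            intro v hv
            rcases hv with h | h | h
            · exact h ▸ hxX
            · exact h ▸ hn1X
            · exact h ▸ hn2X
          have h3 : ({x, n1, n2} : Set V).ncard = 3 :=
            Set.ncard_eq_three.2 ⟨x, n1, n2, hxn1.ne, hxn2.ne, hn1n2, rfl⟩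
          rw [← h3]
          exact Set.ncard_le_ncard hsub
        have hm : π n2 ≠ n1 := h2cyc hX3 n2 hn2X n1 hn1X h21
        have hwne1 : w ≠ n1 := hπn2 ▸ hm
        have hwne2 : w ≠ n2 := by
          intro h
          exact hmove n2 hn2X (h ▸ hπn2)
        have hwA : w ∉ A := by
          rintro (h | h)
          · exact hwne1 (hA1X w h hwX)
          · exact hwne2 (hA2X w h hwX)
        obtain ⟨u, huA1, huadj⟩ := hA1dom w hwA
        have huX : u ∉ X := by
          intro huX
          have := hK3 w hxw u huadj huX
          exact hxA (this ▸ Or.inl huA1)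
        have hun1 : u ≠ n1 := fun h => huX (h ▸ hn1X)
        have hun2 : u ≠ n2 := fun h => huX (h ▸ hn2X)
        apply hsmall (insert x (insert w (((A \ {n1}) \ {n2}) \ {u})))
        · intro v
          by_cases hvX : v ∈ X
          · exact ⟨x, Set.mem_insert _ _, ((hXmem v).1 hvX).imp Eq.symm id⟩
          · by_cases hvA : v ∈ A
            · by_cases hvu : v = u
              · exact ⟨w, Set.mem_insert_of_mem _ (Set.mem_insert _ _),
                  Or.inr (hvu ▸ huadj.symm)⟩
              · have h1 : v ≠ n1 := fun h => hvX (h ▸ hn1X)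
                have h2 : v ≠ n2 := fun h => hvX (h ▸ hn2X)
                exact ⟨v, Set.mem_insert_of_mem _ (Set.mem_insert_of_mem _
                  ⟨⟨⟨hvA, by simp [h1]⟩, by simp [h2]⟩, by simp [hvu]⟩), Or.inl rfl⟩
            · have hvB : v ∉ B := fun h => hvA ((hBAeq v hvX).1 h)
              obtain ⟨z, hzB2, hzadj⟩ := hB2dom v hvB
              by_cases hzX : z ∈ X
              · have hz2 : π.symm z ∈ A2 := (himg A2 z).1 hzB2
                have h1 := hA2X _ hz2 (hπsX z hzX)
                have hzw : z = w := by
                  rw [← hπn2, ← h1]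
                  simp
                exact ⟨w, Set.mem_insert_of_mem _ (Set.mem_insert _ _),
                  Or.inr (hzw ▸ hzadj)⟩
              · have hz2 : z ∈ A2 := by
                  have := (himg A2 z).1 hzB2
                  rwa [hfix' z hzX] at this
                have h1 : z ≠ n1 := fun h => hzX (h ▸ hn1X)
                have h2 : z ≠ n2 := fun h => hzX (h ▸ hn2X)
                have h3 : z ≠ u := fun h =>
                  Set.disjoint_left.mp hdisj huA1 (h ▸ hz2)
                exact ⟨z, Set.mem_insert_of_mem _ (Set.mem_insert_of_mem _
                  ⟨⟨⟨Or.inr hz2, by simp [h1]⟩, by simp [h2]⟩, by simp [h3]⟩),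
                  Or.inr hzadj⟩
        · have h1 := Set.ncard_diff_singleton_add_one (show n1 ∈ A from Or.inl hn1A1)
          have h2 := Set.ncard_diff_singleton_add_one
            (show n2 ∈ A \ {n1} from ⟨Or.inr hn2A2, by simp [Ne.symm hn1n2]⟩)
          have h3 := Set.ncard_diff_singleton_add_one
            (show u ∈ (A \ {n1}) \ {n2} from
              ⟨⟨Or.inl huA1, by simp [hun1]⟩, by simp [hun2]⟩)
          have h4 : w ∉ ((A \ {n1}) \ {n2}) \ {u} := fun h => hwA h.1.1.1
          have h5 : x ∉ insert w (((A \ {n1}) \ {n2}) \ {u}) := by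
            intro h
            rcases h with h | h
            · exact hxw.ne h
            · exact hxA h.1.1.1
          rw [Set.ncard_insert_of_notMem h5, Set.ncard_insert_of_notMem h4]
          omega
      · -- 2b-1 : π n1 ≠ n2
        have hn2B : n2 ∉ B := by
          intro h
          have h1 : π.symm n2 ∈ A := (himg A n2).1 h
          have h2 : π.symm n2 ∈ X := hπsX n2 hn2X
          rcases h1 with h1 | h1
          · have h3 := hA1X _ h1 h2
            apply h21
            rw [← h3]
            simp
          · have h3 := hA2X _ h1 h2
            have h4 := congrArg π h3
            simp only [Equiv.apply_symm_apply] at h4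
            exact hmove n2 hn2X h4.symm
        obtain ⟨z, hzB2, hzadj⟩ := hB2dom n2 hn2B
        have hzX : z ∉ X := by
          intro hzX
          have := hK3 n2 hxn2 z hzadj hzX
          exact hxB (this ▸ hB2B hzB2)
        have hz2 : z ∈ A2 := by
          have := (himg A2 z).1 hzB2
          rwa [hfix' z hzX] at this
        exact hA2iso n2 hn2A2 z (Or.inr hz2) hzadj
end

section
/- Let G be a finite simple graph, x a C3-free vertex of G with closed neighborhood X = N[x], and A = A1 ∪ A2 a separable γ-set of G with A1 dominating V(G) − A. If A ∩ X = {v} for a single vertex v and v ∈ A1, then A is not effective under any permutation π of V(G) that fixes every vertex of V(G) − X pointwise and moves every vertex of X. -/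
open SimpleGraph

variable {V : Type*}

/-- Case 1(1): if `A ∩ X = {v}` with `v ∈ A1`, then `A` is not effective
under any permutation fixing `V - X` pointwise and moving every vertex of `X`. -/
theorem case_one_vertex_in_A1 [Fintype V] (G : SimpleGraph V) (x : V) (hx : C3Free G x)
    (A1 A2 : Set V) (hsep : SepGammaSet G A1 A2) (v : V)
    (hAX : (A1 ∪ A2) ∩ closedNbhd G x = {v}) (hv : v ∈ A1) :
    ∀ π : Equiv.Perm V, (∀ w ∉ closedNbhd G x, π w = w) →
      (∀ w ∈ closedNbhd G x, π w ≠ w) → ¬ Effective G π A1 A2 := by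
  intro π hfix hmove heff
  obtain ⟨hA1ne, hA2ne, hdisj, hdomA, hcardA, hA1dom⟩ := hsep
  obtain ⟨hdom', hcard', heff'⟩ := heff
  set X := closedNbhd G x with hX
  have hvAX : v ∈ (A1 ∪ A2) ∩ X := hAX ▸ rfl
  have hvA : v ∈ A1 ∪ A2 := hvAX.1
  have hvX : v ∈ X := hvAX.2
  -- A2 ∩ X = ∅
  have hA2X : ∀ a ∈ A2, a ∉ X := by
    intro a ha haX
    have : a ∈ (A1 ∪ A2) ∩ X := ⟨Or.inr ha, haX⟩
    rw [hAX] at this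
    exact Set.disjoint_left.mp hdisj (this ▸ hv) ha
  have hπA2 : ⇑π '' A2 = A2 := by
    apply Set.Subset.antisymm
    · rintro _ ⟨a, ha, rfl⟩
      rw [hfix a (hA2X a ha)]; exact ha
    · intro a ha
      exact ⟨a, ha, hfix a (hA2X a ha)⟩
  -- adjacency to x means in X
  have hadjX : ∀ u, G.Adj u x → u ∈ X := by
    intro u hu
    exact Set.mem_insert_of_mem _ (by exact hu.symm)
  -- Step 1: x ∈ π '' A, and in fact π v = x
  have hπvx : π v = x := by
    by_cases hxA : x ∈ ⇑π '' (A1 ∪ A2)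
    · obtain ⟨a, haA, hax⟩ := hxA
      by_cases haX : a ∈ X
      · have : a ∈ (A1 ∪ A2) ∩ X := ⟨haA, haX⟩
        rw [hAX] at this
        rw [this] at hax; exact hax
      · rw [hfix a haX] at hax
        exact absurd (hax ▸ Set.mem_insert x _) haX
    · obtain ⟨u, huA2, hadj⟩ := heff' x hxA
      rw [hπA2] at huA2
      exact absurd (hadjX u hadj) (hA2X u huA2)
  have hvx : v ≠ x := by
    intro h
    exact hmove v hvX (by rw [hπvx, h])
  -- Step 2: v ∉ π '' A
  have hvnπA : v ∉ ⇑π '' (A1 ∪ A2) := by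
    rintro ⟨a, haA, hav⟩
    by_cases haX : a ∈ X
    · have : a ∈ (A1 ∪ A2) ∩ X := ⟨haA, haX⟩
      rw [hAX] at this
      rw [this, hπvx] at hav
      exact hvx hav.symm
    · rw [hfix a haX] at hav
      exact haX (hav ▸ hvX)
  -- get u ∈ A2 adjacent to v
  obtain ⟨u, huA2, hadjuv⟩ := heff' v hvnπA
  rw [hπA2] at huA2
  have huv : u ≠ v := fun h => (Set.disjoint_left.mp hdisj hv (h ▸ huA2))
  -- Step 3: A \ {u} is a dominating set of smaller size
  have hDdom : IsDomSet G ((A1 ∪ A2) \ {u}) := by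
    intro w
    by_cases hwA : w ∈ A1 ∪ A2
    · by_cases hwu : w = u
      · exact ⟨v, ⟨hvA, fun h => huv (Set.mem_singleton_iff.mp h).symm⟩,
          Or.inr (hwu ▸ hadjuv.symm)⟩
      · exact ⟨w, ⟨hwA, hwu⟩, Or.inl rfl⟩
    · obtain ⟨d, hd, hadjd⟩ := hA1dom w hwA
      exact ⟨d, ⟨Or.inl hd, fun h => Set.disjoint_left.mp hdisj hd
        ((Set.mem_singleton_iff.mp h) ▸ huA2)⟩, Or.inr hadjd⟩
  have hfin : (A1 ∪ A2).Finite := Set.toFinite _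
  have hcardD : ((A1 ∪ A2) \ {u}).ncard = (A1 ∪ A2).ncard - 1 := by
    exact Set.ncard_diff_singleton_of_mem (show u ∈ A1 ∪ A2 from Or.inr huA2)
  have hpos : 0 < (A1 ∪ A2).ncard := Set.ncard_pos hfin |>.mpr ⟨v, hvA⟩
  have hle : domNum G ≤ (A1 ∪ A2).ncard - 1 := by
    apply Nat.sInf_le
    exact ⟨(A1 ∪ A2) \ {u}, hDdom, hcardD⟩
  rw [hcardA] at hle hpos
  omega
end
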